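/- Let f : ℝⁿ → ℝ be differentiable and μ-strongly convex for some μ > 0 (with respect to a norm on ℝⁿ). Let x ∈ ℝⁿ with ∇f(x) ≠ 0. Then there exists exactly one t > 0 such that f(x − t·∇f(x)) = f(x). -/

import Mathlib

set_option maxHeartbeats 1000000 in
/-- For `f : ℝⁿ → ℝ` differentiable and `μ`-strongly convex (with
respect to any norm on ℝⁿ), and `x` with `∇f(x) ≠ 0`, there is exactly one `t > 0`
such that `f(x − t·∇f(x)) = f(x)`. -/
theorem stmt13 {n : ℕ} (f : EuclideanSpace ℝ (Fin n) → ℝ)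
    (hdiff : Differentiable ℝ f) (μ : ℝ) (hμ : 0 < μ)
    (nrm : Seminorm ℝ (EuclideanSpace ℝ (Fin n))) (hnrm : ∀ w, nrm w = 0 → w = 0)
    (hsc : ∀ x z : EuclideanSpace ℝ (Fin n), ∀ t : ℝ, t ∈ Set.Icc (0 : ℝ) 1 →
      f (t • x + (1 - t) • z) ≤
        t * f x + (1 - t) * f z - (μ / 2) * t * (1 - t) * (nrm (x - z)) ^ 2)
    (x : EuclideanSpace ℝ (Fin n)) (hgx : gradient f x ≠ 0) :
    ∃! t : ℝ, 0 < t ∧ f (x - t • gradient f x) = f x := by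
  set g := gradient f x with hgdef
  set c := nrm g with hcdef
  have hc0 : 0 < c :=
    lt_of_le_of_ne (apply_nonneg nrm g) (fun h => hgx (hnrm g h.symm))
  set φ : ℝ → ℝ := fun t => f (x - t • g) with hφ
  have hφ0 : φ 0 = f x := by simp [hφ]
  have hcont : Continuous φ := hdiff.continuous.comp (continuous_const.sub (continuous_id.smul continuous_const))
  -- basic strong convexity inequality along the ray
  have key : ∀ a s : ℝ, 0 ≤ a → 0 ≤ s → s ≤ 1 →
      φ (s * a) ≤ s * φ a + (1 - s) * f x - μ / 2 * s * (1 - s) * (a * c) ^ 2 := by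
    intro a s ha hs0 hs1
    have h := hsc (x - a • g) x s ⟨hs0, hs1⟩
    have e1 : s • (x - a • g) + (1 - s) • x = x - (s * a) • g := by module
    have e2 : x - a • g - x = (-a) • g := by module
    rw [e1, e2] at h
    have e3 : nrm ((-a) • g) = a * c := by
      rw [map_smul_eq_mul, Real.norm_eq_abs, abs_neg, abs_of_nonneg ha, hcdef]
    rw [e3] at h
    calc φ (s * a) = f (x - (s * a) • g) := rfl
      _ ≤ _ := h
      _ = s * φ a + (1 - s) * f x - μ / 2 * s * (1 - s) * (a * c) ^ 2 := by ring
  -- multiplied-out form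
  have key2 : ∀ a b : ℝ, 0 ≤ b → b ≤ a →
      a * φ b ≤ b * φ a + (a - b) * f x - μ / 2 * b * (a - b) * a * c ^ 2 := by
    intro a b hb hba
    rcases eq_or_lt_of_le (hb.trans hba) with h | ha
    · have hb0 : b = 0 := le_antisymm (hba.trans h.symm.le) hb
      rw [← h, hb0]
      simp
    · have hk := key a (b / a) (hb.trans hba) (by positivity)
        (by rw [div_le_one ha]; exact hba)
      rw [div_mul_cancel₀ _ ha.ne'] at hk
      have h2 := mul_le_mul_of_nonneg_left hk ha.le
      have e : a * ((b / a) * φ a + (1 - b / a) * f x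
            - μ / 2 * (b / a) * (1 - b / a) * (a * c) ^ 2)
          = b * φ a + (a - b) * f x - μ / 2 * b * (a - b) * a * c ^ 2 := by
        field_simp
      rw [e] at h2
      exact h2
  -- derivative at 0 is -‖g‖² < 0
  have hline : HasDerivAt (fun t : ℝ => x - t • g) (-g) 0 := by
    simpa using ((hasDerivAt_id (0 : ℝ)).smul_const g).const_sub x
  have hfd : HasFDerivAt f ((InnerProductSpace.toDual ℝ _) g) ((fun t : ℝ => x - t • g) 0) := by
    simpa [hgdef] using (hdiff x).hasGradientAt.hasFDerivAt
  have hφder : HasDerivAt φ (-(‖g‖ ^ 2)) 0 := by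
    have h := hfd.comp_hasDerivAt 0 hline
    have e : (InnerProductSpace.toDual ℝ _) g (-g) = -(‖g‖ ^ 2) := by
      rw [InnerProductSpace.toDual_apply_apply, inner_neg_right, real_inner_self_eq_norm_sq]
    rw [e] at h
    exact h
  -- there is t₀ > 0 with φ t₀ < f x
  have hneg : ∃ t₀ : ℝ, 0 < t₀ ∧ φ t₀ < f x := by
    have hslope := hasDerivAt_iff_tendsto_slope.mp hφder
    have hlt : (-(‖g‖ ^ 2) : ℝ) < 0 := by
      have : 0 < ‖g‖ := norm_pos_iff.mpr hgx
      nlinarith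
    have hev : ∀ᶠ t in nhdsWithin (0 : ℝ) {(0 : ℝ)}ᶜ, slope φ 0 t < 0 :=
      hslope.eventually (eventually_lt_nhds hlt)
    have hmono : nhdsWithin (0 : ℝ) (Set.Ioi 0) ≤ nhdsWithin (0 : ℝ) {(0 : ℝ)}ᶜ :=
      nhdsWithin_mono 0 (fun y hy => ne_of_gt hy)
    have hev2 : ∀ᶠ t in nhdsWithin (0 : ℝ) (Set.Ioi 0), slope φ 0 t < 0 := hev.filter_mono hmono
    have hev3 : ∀ᶠ t in nhdsWithin (0 : ℝ) (Set.Ioi 0), t ∈ Set.Ioi (0 : ℝ) :=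
      self_mem_nhdsWithin
    obtain ⟨t, hts, ht0⟩ := (hev2.and hev3).exists
    refine ⟨t, ht0, ?_⟩
    have hsl : slope φ 0 t = (φ t - f x) / t := by
      rw [slope_def_field]
      simp [hφ0]
    rw [hsl] at hts
    have := div_neg_iff.mp hts
    rcases this with ⟨h1, h2⟩ | ⟨h1, h2⟩
    · linarith [lt_of_lt_of_le h2 (le_of_lt ht0)]
    · linarith
  obtain ⟨t₀, ht₀, hφt₀⟩ := hneg
  set d := f x - φ t₀ with hd
  have hd0 : 0 < d := by simp only [hd]; linarith
  set T := t₀ + 2 * d / (t₀ * μ * c ^ 2) + 1 with hT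
  have hTt₀ : t₀ < T := by
    have h1 : 0 < 2 * d / (t₀ * μ * c ^ 2) := by positivity
    simp only [hT]; linarith
  have hT0 : 0 < T := ht₀.trans hTt₀
  have hTeq : (T - t₀) * (t₀ * μ * c ^ 2) = 2 * d + t₀ * μ * c ^ 2 := by
    have hne : t₀ * μ * c ^ 2 ≠ 0 := by positivity
    rw [hT]
    field_simp
    ring
  have hφT : f x < φ T := by
    have hk := key2 T t₀ ht₀.le hTt₀.le
    by_contra hA
    push_neg at hA
    have h1 : μ / 2 * t₀ * (T - t₀) * T * c ^ 2 ≤ T * d := by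
      nlinarith [hk, mul_le_mul_of_nonneg_left hA ht₀.le, hd]
    have h2 : μ / 2 * t₀ * (T - t₀) * c ^ 2 = d + t₀ * μ * c ^ 2 / 2 := by
      linear_combination hTeq / 2
    have h4 : T * (d + t₀ * μ * c ^ 2 / 2) ≤ T * d := by
      calc T * (d + t₀ * μ * c ^ 2 / 2)
          = T * (μ / 2 * t₀ * (T - t₀) * c ^ 2) := by rw [h2]
        _ = μ / 2 * t₀ * (T - t₀) * T * c ^ 2 := by ring
        _ ≤ T * d := h1
    have h5 : 0 < T * (t₀ * μ * c ^ 2 / 2) := by positivity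
    nlinarith [h4, h5]
  -- intermediate value theorem
  have hIVT : f x ∈ φ '' Set.Ioo t₀ T :=
    intermediate_value_Ioo hTt₀.le hcont.continuousOn ⟨hφt₀, hφT⟩
  obtain ⟨t, htI, htval⟩ := hIVT
  -- uniqueness helper
  have huniq : ∀ a b : ℝ, 0 < a → a < b → φ a = f x → φ b = f x → False := by
    intro a b ha hab hfa hfb
    have hk := key2 b a ha.le hab.le
    rw [hfa, hfb] at hk
    have hpos : 0 < μ / 2 * a * (b - a) * b * c ^ 2 := by
      have hba : 0 < b - a := sub_pos.mpr hab
      have hb : 0 < b := ha.trans hab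
      positivity
    linarith [hk, hpos]
  refine ⟨t, ⟨ht₀.trans htI.1, htval⟩, ?_⟩
  rintro y ⟨hy0, hyval⟩
  by_contra hne
  rcases lt_or_gt_of_ne hne with h | h
  · exact huniq y t hy0 h hyval htval
  · exact huniq t y (ht₀.trans htI.1) h htval hyval
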